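/- Let m ∈ ℕ, let j_1 < … < j_m be distinct positive odd integers, let k_1 < … < k_m be distinct positive even integers, let α ∈ ℂ with α ≠ 0, and let γ_0, γ_1, …, γ_m, δ_1, …, δ_m be nonzero complex numbers. Then there is no tuple (x_1,…,x_m, y_0, y_1,…,y_m) ∈ ℂ^{2m+1} satisfying, for every r ∈ {0,…,m} (with the convention 0^0 = 1): Σ_{i=1}^{m} α j_i^r δ_i x_i + 0^r γ_0 y_0 + Σ_{i=1}^{m} k_i^r γ_i y_i = 0^r γ_0, and Σ_{i=1}^{m} (−j_i^r δ_i) x_i + conj(α)·(0^r γ_0 y_0 + Σ_{i=1}^{m} k_i^r γ_i y_i) = −0^r conj(α) γ_0. -/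

import Mathlib

open Finset

/-- The inconsistent linear system (Eqs. linearSystem1,
linearSystem2 and matrixEquation) at the heart of the proof of Theorem 3 of
the paper: for distinct positive odd integers `j_1 < … < j_m`, distinct
positive even integers `k_1 < … < k_m`, `α ≠ 0` and nonzero weights
`γ_0, …, γ_m, δ_1, …, δ_m`, there is no tuple `(x, y_0, y)` satisfying, for
every `0 ≤ r ≤ m` (with `0^0 = 1`),
`∑_i α j_i^r δ_i x_i + 0^r γ_0 y_0 + ∑_i k_i^r γ_i y_i = 0^r γ_0` and
`∑_i (−j_i^r δ_i) x_i + conj(α)(0^r γ_0 y_0 + ∑_i k_i^r γ_i y_i)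
  = −0^r conj(α) γ_0`. -/
theorem stmt_11 (m : ℕ) (j k : Fin m → ℕ)
    (hjmono : StrictMono j) (hkmono : StrictMono k)
    (hjodd : ∀ i, Odd (j i)) (hjpos : ∀ i, 0 < j i)
    (hkeven : ∀ i, Even (k i)) (hkpos : ∀ i, 0 < k i)
    (α : ℂ) (hα : α ≠ 0)
    (γ0 : ℂ) (hγ0 : γ0 ≠ 0)
    (γ δ : Fin m → ℂ) (hγ : ∀ i, γ i ≠ 0) (hδ : ∀ i, δ i ≠ 0) :
    ¬ ∃ (x : Fin m → ℂ) (y0 : ℂ) (y : Fin m → ℂ),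
      ∀ r ≤ m,
        ((∑ i, α * ((j i : ℂ)) ^ r * δ i * x i) + (0 : ℂ) ^ r * γ0 * y0 +
            (∑ i, ((k i : ℂ)) ^ r * γ i * y i) = (0 : ℂ) ^ r * γ0) ∧
        ((∑ i, (-(((j i : ℂ)) ^ r) * δ i) * x i) +
            (starRingEnd ℂ) α * ((0 : ℂ) ^ r * γ0 * y0 +
              ∑ i, ((k i : ℂ)) ^ r * γ i * y i) =
          -((0 : ℂ) ^ r) * (starRingEnd ℂ) α * γ0) := by
  rintro ⟨x, y0, y, h⟩
  set S : ℕ → ℂ := fun r => ∑ i, (j i : ℂ) ^ r * (δ i * x i) with hS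
  have hden : (starRingEnd ℂ) α * α + 1 ≠ 0 := by
    rw [mul_comm, Complex.mul_conj]
    have h0 : (Complex.normSq α + 1 : ℝ) ≠ 0 :=
      ne_of_gt (add_pos_of_nonneg_of_pos (Complex.normSq_nonneg α) one_pos)
    exact_mod_cast h0
  have key : ∀ r ≤ m, ((starRingEnd ℂ) α * α + 1) * S r = 2 * (0:ℂ) ^ r * (starRingEnd ℂ) α * γ0 := by
    intro r hr
    obtain ⟨h1, h2⟩ := h r hr
    have e1 : (∑ i, α * ((j i : ℂ)) ^ r * δ i * x i) = α * S r := by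
      rw [hS, Finset.mul_sum]
      exact Finset.sum_congr rfl fun i _ => by ring
    have e2 : (∑ i, (-(((j i : ℂ)) ^ r) * δ i) * x i) = -(S r) := by
      rw [hS, ← Finset.sum_neg_distrib]
      exact Finset.sum_congr rfl fun i _ => by ring
    rw [e1] at h1
    rw [e2] at h2
    linear_combination (starRingEnd ℂ) α * h1 - h2
  -- For 1 ≤ r ≤ m, S r = 0
  have hSzero : ∀ r, 1 ≤ r → r ≤ m → S r = 0 := by
    intro r hr1 hrm
    have := key r hrm
    rw [zero_pow (by omega : r ≠ 0)] at this
    simpa [hden] using this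
  -- Vandermonde argument: δ i * x i = 0 for all i
  have hv : (fun i : Fin m => (j i : ℂ) * (δ i * x i)) = 0 := by
    apply Matrix.eq_zero_of_forall_pow_sum_mul_pow_eq_zero
      (f := fun i : Fin m => (j i : ℂ))
    · intro a b hab
      exact hjmono.injective (Nat.cast_injective hab)
    · intro r
      have := hSzero (r.val + 1) (by omega) (by omega)
      rw [hS] at this
      calc (∑ i : Fin m, (j i : ℂ) * (δ i * x i) * (j i : ℂ) ^ (r : ℕ))
          = ∑ i : Fin m, (j i : ℂ) ^ ((r : ℕ) + 1) * (δ i * x i) :=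
            Finset.sum_congr rfl fun i _ => by ring
        _ = 0 := this
  have hux : ∀ i, δ i * x i = 0 := by
    intro i
    have hji : (j i : ℂ) ≠ 0 := by
      exact_mod_cast (hjpos i).ne'
    have := congrFun hv i
    simp only [Pi.zero_apply] at this
    exact (mul_eq_zero.mp this).resolve_left hji
  -- But S 0 ≠ 0
  have hS0 : S 0 = 0 := by
    rw [hS]
    simp [hux]
  have := key 0 (Nat.zero_le m)
  rw [hS0, mul_zero, pow_zero] at this
  have h2 : (2 : ℂ) * 1 * (starRingEnd ℂ) α * γ0 ≠ 0 := by
    have : (starRingEnd ℂ) α ≠ 0 := by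
      simpa using hα
    field_simp
    exact mul_ne_zero (mul_ne_zero two_ne_zero this) hγ0
  exact h2 this.symm
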